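/- Let G be a biconnected finite graph. Then for any two distinct edges e_i, e_j of G there exists a spanning tree F of G containing e_i such that (E(F) \ {e_i}) ∪ {e_j} is again a spanning tree of G. -/

import Mathlib

/-- `F` is (the edge set of) a spanning tree of `G`: a set of edges of `G` such that the
graph on the vertex set of `G` with edge set `F` is a tree (connected and acyclic). -/
def IsSpanningTree {V : Type*} (G : SimpleGraph V) (F : Set (Sym2 V)) : Prop :=
  F ⊆ G.edgeSet ∧ (SimpleGraph.fromEdgeSet F).IsTree

section Aux


open SimpleGraph

variable {V : Type*} (G : SimpleGraph V)

/-- Reachability within a vertex set `S`, as a reflexive-transitive closure. -/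
def RW (S : Set V) : V → V → Prop :=
  Relation.ReflTransGen (fun a b => G.Adj a b ∧ a ∈ S ∧ b ∈ S)

variable {G}

lemma rw_refl {S : Set V} {x : V} : RW G S x x := Relation.ReflTransGen.refl

lemma rw_trans {S : Set V} {x y z : V} (h : RW G S x y) (h' : RW G S y z) : RW G S x z :=
  Relation.ReflTransGen.trans h h'

lemma rw_symm {S : Set V} {x y : V} (h : RW G S x y) : RW G S y x := by
  induction h with
  | refl => exact rw_refl
  | tail _ h2 ih => exact rw_trans (Relation.ReflTransGen.single ⟨h2.1.symm, h2.2.2, h2.2.1⟩) ih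

lemma rw_mono {S T : Set V} (hST : S ⊆ T) {x y : V} (h : RW G S x y) : RW G T x y := by
  induction h with
  | refl => exact rw_refl
  | tail _ h2 ih => exact ih.tail ⟨h2.1, hST h2.2.1, hST h2.2.2⟩

lemma rw_mem_right {S : Set V} {x y : V} (h : RW G S x y) (hx : x ∈ S) : y ∈ S := by
  induction h with
  | refl => exact hx
  | tail _ h2 _ => exact h2.2.2

/-- All-pairs reachability within `S`. -/
def Conn (G : SimpleGraph V) (S : Set V) : Prop :=
  ∀ ⦃x⦄, x ∈ S → ∀ ⦃y⦄, y ∈ S → RW G S x y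

/-- Confinement lemma: a walk within `Q` starting in `P`, where edges from `P` inside `Q`
only lead to `P` or into `X`, either stays in `P` or first exits via an edge into `X`. -/
lemma confine {P X Q : Set V} {w y : V} (h : RW G Q w y) (hw : w ∈ P)
    (hcl : ∀ c c', c ∈ P → c' ∈ Q → G.Adj c c' → c' ∈ P ∨ c' ∈ X) :
    (RW G P w y ∧ y ∈ P) ∨ ∃ c t, c ∈ P ∧ t ∈ X ∧ t ∈ Q ∧ RW G P w c ∧ G.Adj c t := by
  induction h using Relation.ReflTransGen.head_induction_on with
  | refl => exact Or.inl ⟨rw_refl, hw⟩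
  | head h2 _ ih =>
    obtain ⟨hadj, haQ, hcQ⟩ := h2
    rename_i a c _
    rcases hcl a c hw hcQ hadj with hcP | hcX
    · rcases ih hcP with ⟨hr, hy⟩ | ⟨c', t, hc', ht, htQ, hr, hadj'⟩
      · exact Or.inl ⟨Relation.ReflTransGen.head ⟨hadj, hw, hcP⟩ hr, hy⟩
      · exact Or.inr ⟨c', t, hc', ht, htQ, Relation.ReflTransGen.head ⟨hadj, hw, hcP⟩ hr, hadj'⟩
    · exact Or.inr ⟨a, c, hw, hcX, hcQ, rw_refl, hadj⟩

/-- Transfer from connectivity of an induced subgraph. -/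
lemma induce_walk_rw {S : Set V} : ∀ {c d : S} (_ : (G.induce S).Walk c d), RW G S c.1 d.1 := by
  intro c d p
  induction p with
  | nil => exact rw_refl
  | @cons u v _ h p ih =>
    exact Relation.ReflTransGen.head ⟨h, u.2, v.2⟩ ih

lemma induce_connected_conn {S : Set V} (h : (G.induce S).Connected) : Conn G S := by
  intro x hx y hy
  obtain ⟨p⟩ := h.preconnected ⟨x, hx⟩ ⟨y, hy⟩
  exact induce_walk_rw p

/-- Connected component of `z` within `S`. -/
def Cmp (G : SimpleGraph V) (S : Set V) (z : V) : Set V := {w | w ∈ S ∧ RW G S z w}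

lemma cmp_subset {S : Set V} {z : V} : Cmp G S z ⊆ S := fun _ h => h.1

lemma mem_cmp_self {S : Set V} {z : V} (hz : z ∈ S) : z ∈ Cmp G S z := ⟨hz, rw_refl⟩

lemma cmp_closed {S : Set V} {z c c' : V} (hc : c ∈ Cmp G S z) (hc' : c' ∈ S)
    (h : G.Adj c c') : c' ∈ Cmp G S z :=
  ⟨hc', hc.2.tail ⟨h, hc.1, hc'⟩⟩

/-- A walk within `S` from `z` stays within the component of `z`. -/
lemma rw_cmp {S : Set V} {z w : V} (hz : z ∈ S) (h : RW G S z w) : RW G (Cmp G S z) z w := by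
  induction h with
  | refl => exact rw_refl
  | tail h1 h2 ih => exact ih.tail ⟨h2.1, ⟨h2.2.1, h1⟩, ⟨h2.2.2, h1.tail h2⟩⟩

lemma cmp_conn {S : Set V} {z : V} (hz : z ∈ S) : Conn G (Cmp G S z) := by
  intro x hx y hy
  exact rw_trans (rw_symm (rw_cmp hz hx.2)) (rw_cmp hz hy.2)

lemma rw_of_mem_cmp {S : Set V} {z w : V} (h : w ∈ Cmp G S z) : RW G S z w := h.2

variable {V : Type*} {G : SimpleGraph V}

/-- `E` is the edge set of a spanning tree of the induced graph on `A`. -/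
def OnTree (G : SimpleGraph V) (A : Set V) (E : Set (Sym2 V)) : Prop :=
  E ⊆ G.edgeSet ∧ (∀ e ∈ E, ∀ x ∈ e, x ∈ A) ∧ (fromEdgeSet E).IsAcyclic ∧
    ∀ ⦃x⦄, x ∈ A → ∀ ⦃y⦄, y ∈ A → (fromEdgeSet E).Reachable x y

/-- Project reachability along a vertex map that sends adjacency to reachability. -/
lemma proj_reachable {W : Type*} {H : SimpleGraph V} {K : SimpleGraph W} {π : V → W}
    (h : ∀ a b, H.Adj a b → K.Reachable (π a) (π b)) {x y : V}
    (hr : H.Reachable x y) : K.Reachable (π x) (π y) := by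
  obtain ⟨p⟩ := hr
  induction p with
  | nil => exact Reachable.refl _
  | cons ha p ih => exact (h _ _ ha).trans ih

lemma onTree_singleton {x : V} : OnTree G {x} (∅ : Set (Sym2 V)) := by
  refine ⟨by simp, by simp, ?_, ?_⟩
  · intro v p hp
    cases p with
    | nil => exact absurd rfl hp.ne_nil
    | cons h _ => exact absurd ((fromEdgeSet_adj _).mp h).1 (Set.notMem_empty _)
  · rintro a rfl b rfl
    exact Reachable.refl _

/-- Joining two trees on disjoint vertex sets with one crossing edge. -/
lemma onTree_join {A B : Set V} {E₁ E₂ : Set (Sym2 V)} {p q : V}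
    (hAB : ∀ x, ¬(x ∈ A ∧ x ∈ B))
    (h₁ : OnTree G A E₁) (h₂ : OnTree G B E₂) (hp : p ∈ A) (hq : q ∈ B)
    (hpq : G.Adj p q) : OnTree G (A ∪ B) (E₁ ∪ E₂ ∪ {s(p, q)}) := by
  classical
  obtain ⟨hE₁G, hE₁A, hac₁, hre₁⟩ := h₁
  obtain ⟨hE₂G, hE₂B, hac₂, hre₂⟩ := h₂
  set E : Set (Sym2 V) := E₁ ∪ E₂ ∪ {s(p, q)} with hE
  have hEG : E ⊆ G.edgeSet := by
    rintro e ((he | he) | he)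
    · exact hE₁G he
    · exact hE₂G he
    · rw [Set.mem_singleton_iff] at he; subst he; exact hpq
  have hne : p ≠ q := hpq.ne
  -- membership of endpoints
  have hmem : ∀ e ∈ E, ∀ x ∈ e, x ∈ A ∪ B := by
    rintro e ((he | he) | he) x hx
    · exact Or.inl (hE₁A e he x hx)
    · exact Or.inr (hE₂B e he x hx)
    · rw [Set.mem_singleton_iff] at he; subst he
      rcases Sym2.mem_iff.mp hx with rfl | rfl
      · exact Or.inl hp
      · exact Or.inr hq
  refine ⟨hEG, hmem, ?_, ?_⟩
  · -- acyclicity via bridges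
    rw [isAcyclic_iff_forall_adj_isBridge]
    intro v w hvw
    have hvwE : s(v, w) ∈ E ∧ v ≠ w := (fromEdgeSet_adj _).mp hvw
    rw [isBridge_iff]
    rcases hvwE.1 with (hin | hin) | hin
    · -- edge of E₁ : project to A, collapsing B to p
      intro hreach
      have hv : v ∈ A := hE₁A _ hin v (Sym2.mem_mk_left v w)
      have hw : w ∈ A := hE₁A _ hin w (Sym2.mem_mk_right v w)
      set π : V → V := fun z => if z ∈ A then z else p with hπ
      have key : ∀ a b, (fromEdgeSet E \ fromEdgeSet {s(v, w)}).Adj a b →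
          (fromEdgeSet E₁ \ fromEdgeSet {s(v, w)}).Reachable (π a) (π b) := by
        intro a b hab
        obtain ⟨hab1, hab2⟩ := hab
        have habne : a ≠ b := hab1.ne
        have habE : s(a, b) ∈ E := ((fromEdgeSet_adj _).mp hab1).1
        have habne' : s(a, b) ≠ s(v, w) := by
          intro hcon
          exact hab2 ((fromEdgeSet_adj _).mpr ⟨by rw [hcon]; rfl, habne⟩)
        rcases habE with (hab' | hab') | hab'
        · have ha : a ∈ A := hE₁A _ hab' a (Sym2.mem_mk_left a b)
          have hb : b ∈ A := hE₁A _ hab' b (Sym2.mem_mk_right a b)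
          refine Adj.reachable ?_
          simp only [hπ, if_pos ha, if_pos hb, SimpleGraph.sdiff_adj]
          constructor
          · exact (fromEdgeSet_adj _).mpr ⟨hab', habne⟩
          · intro hcon
            exact habne' ((fromEdgeSet_adj _).mp hcon).1
        · have ha : a ∈ B := hE₂B _ hab' a (Sym2.mem_mk_left a b)
          have hb : b ∈ B := hE₂B _ hab' b (Sym2.mem_mk_right a b)
          have ha' : ¬ a ∈ A := fun h => hAB a ⟨h, ha⟩
          have hb' : ¬ b ∈ A := fun h => hAB b ⟨h, hb⟩
          simp only [hπ, if_neg ha', if_neg hb']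
          exact Reachable.refl _
        · rw [Set.mem_singleton_iff, Sym2.eq_iff] at hab'
          have hq' : ¬ q ∈ A := fun h => hAB q ⟨h, hq⟩
          have : π a = π b := by
            rcases hab' with ⟨rfl, rfl⟩ | ⟨rfl, rfl⟩ <;>
              simp only [hπ, if_pos hp, if_neg hq']
          rw [this]
      have := proj_reachable key hreach
      simp only [hπ, if_pos hv, if_pos hw] at this
      have hbridge := (isAcyclic_iff_forall_adj_isBridge.mp hac₁)
        ((fromEdgeSet_adj _).mpr ⟨hin, hvwE.2⟩)
      exact (isBridge_iff.mp hbridge) this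
    · -- edge of E₂ : symmetric
      intro hreach
      have hv : v ∈ B := hE₂B _ hin v (Sym2.mem_mk_left v w)
      have hw : w ∈ B := hE₂B _ hin w (Sym2.mem_mk_right v w)
      set π : V → V := fun z => if z ∈ B then z else q with hπ
      have key : ∀ a b, (fromEdgeSet E \ fromEdgeSet {s(v, w)}).Adj a b →
          (fromEdgeSet E₂ \ fromEdgeSet {s(v, w)}).Reachable (π a) (π b) := by
        intro a b hab
        obtain ⟨hab1, hab2⟩ := hab
        have habne : a ≠ b := hab1.ne
        have habE : s(a, b) ∈ E := ((fromEdgeSet_adj _).mp hab1).1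
        have habne' : s(a, b) ≠ s(v, w) := by
          intro hcon
          exact hab2 ((fromEdgeSet_adj _).mpr ⟨by rw [hcon]; rfl, habne⟩)
        rcases habE with (hab' | hab') | hab'
        · have ha : a ∈ A := hE₁A _ hab' a (Sym2.mem_mk_left a b)
          have hb : b ∈ A := hE₁A _ hab' b (Sym2.mem_mk_right a b)
          have ha' : ¬ a ∈ B := fun h => hAB a ⟨ha, h⟩
          have hb' : ¬ b ∈ B := fun h => hAB b ⟨hb, h⟩
          simp only [hπ, if_neg ha', if_neg hb']
          exact Reachable.refl _
        · have ha : a ∈ B := hE₂B _ hab' a (Sym2.mem_mk_left a b)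
          have hb : b ∈ B := hE₂B _ hab' b (Sym2.mem_mk_right a b)
          refine Adj.reachable ?_
          simp only [hπ, if_pos ha, if_pos hb, SimpleGraph.sdiff_adj]
          constructor
          · exact (fromEdgeSet_adj _).mpr ⟨hab', habne⟩
          · intro hcon
            exact habne' ((fromEdgeSet_adj _).mp hcon).1
        · rw [Set.mem_singleton_iff, Sym2.eq_iff] at hab'
          have hp' : ¬ p ∈ B := fun h => hAB p ⟨hp, h⟩
          have : π a = π b := by
            rcases hab' with ⟨rfl, rfl⟩ | ⟨rfl, rfl⟩ <;>
              simp only [hπ, if_neg hp', if_pos hq]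
          rw [this]
      have := proj_reachable key hreach
      simp only [hπ, if_pos hv, if_pos hw] at this
      have hbridge := (isAcyclic_iff_forall_adj_isBridge.mp hac₂)
        ((fromEdgeSet_adj _).mpr ⟨hin, hvwE.2⟩)
      exact (isBridge_iff.mp hbridge) this
    · -- the crossing edge: project to Bool
      rw [Set.mem_singleton_iff] at hin
      intro hreach
      set π : V → Bool := fun z => decide (z ∈ A) with hπ
      have key : ∀ a b, (fromEdgeSet E \ fromEdgeSet {s(v, w)}).Adj a b →
          (⊥ : SimpleGraph Bool).Reachable (π a) (π b) := by
        intro a b hab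
        obtain ⟨hab1, hab2⟩ := hab
        have habne : a ≠ b := hab1.ne
        have habE : s(a, b) ∈ E := ((fromEdgeSet_adj _).mp hab1).1
        have habne' : s(a, b) ≠ s(v, w) := by
          intro hcon
          exact hab2 ((fromEdgeSet_adj _).mpr ⟨by rw [hcon]; rfl, habne⟩)
        have heq : π a = π b := by
          rcases habE with (hab' | hab') | hab'
          · have ha : a ∈ A := hE₁A _ hab' a (Sym2.mem_mk_left a b)
            have hb : b ∈ A := hE₁A _ hab' b (Sym2.mem_mk_right a b)
            simp [hπ, ha, hb]
          · have ha : ¬ a ∈ A := fun h => hAB a ⟨h, hE₂B _ hab' a (Sym2.mem_mk_left a b)⟩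
            have hb : ¬ b ∈ A := fun h => hAB b ⟨h, hE₂B _ hab' b (Sym2.mem_mk_right a b)⟩
            simp [hπ, ha, hb]
          · exact absurd (hab'.trans hin.symm) habne'
        rw [heq]
      have hvwpq : s(v, w) = s(p, q) := hin
      rw [Sym2.eq_iff] at hvwpq
      have hq' : ¬ q ∈ A := fun h => hAB q ⟨h, hq⟩
      have := proj_reachable key hreach
      rw [reachable_bot] at this
      rcases hvwpq with ⟨rfl, rfl⟩ | ⟨rfl, rfl⟩ <;>
        simp [hπ, hp, hq'] at this
  · -- spanning reachability
    have hlift₁ : fromEdgeSet E₁ ≤ fromEdgeSet E := fromEdgeSet_mono (by intro e he; exact Or.inl (Or.inl he))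
    have hlift₂ : fromEdgeSet E₂ ≤ fromEdgeSet E := fromEdgeSet_mono (by intro e he; exact Or.inl (Or.inr he))
    have hadjpq : (fromEdgeSet E).Adj p q := (fromEdgeSet_adj _).mpr ⟨Or.inr rfl, hne⟩
    have hto : ∀ ⦃x⦄, x ∈ A ∪ B → (fromEdgeSet E).Reachable x p := by
      rintro x (hx | hx)
      · exact Reachable.mono hlift₁ (hre₁ hx hp)
      · exact (Reachable.mono hlift₂ (hre₂ hx hq)).trans hadjpq.symm.reachable
    intro x hx y hy
    exact (hto hx).trans (hto hy).symm

lemma exists_onTree [Fintype V] : ∀ (n : ℕ) (S : Set V), S.ncard ≤ n → S.Nonempty →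
    Conn G S → ∃ E : Set (Sym2 V), OnTree G S E := by
  intro n
  induction n with
  | zero =>
    intro S hcard hne _
    rw [Nat.le_zero] at hcard
    rw [Set.ncard_eq_zero (Set.toFinite S)] at hcard
    exact absurd hcard hne.ne_empty
  | succ n ih =>
    intro S hcard hne hconnS
    obtain ⟨x, hx⟩ := hne
    by_cases hsing : ∀ y ∈ S, y = x
    · have : S = {x} := Set.eq_singleton_iff_unique_mem.mpr ⟨hx, hsing⟩
      subst this
      exact ⟨∅, onTree_singleton⟩
    push_neg at hsing
    obtain ⟨z, hz, hzx⟩ := hsing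
    -- component of z in S \ {x}
    set D : Set V := Cmp G (S \ {x}) z with hD
    have hzD : z ∈ D := mem_cmp_self ⟨hz, hzx⟩
    have hDS : D ⊆ S \ {x} := cmp_subset
    have hxD : x ∉ D := fun h => (hDS h).2 rfl
    -- D is connected
    have hconnD : Conn G D := cmp_conn ⟨hz, hzx⟩
    -- S \ D is connected: every vertex reaches x within S \ D
    have hxSD : x ∈ S \ D := ⟨hx, hxD⟩
    have hSD : ∀ w ∈ S \ D, RW G (S \ D) w x := by
      rintro w ⟨hwS, hwD⟩
      by_cases hwx : w = x
      · subst hwx; exact rw_refl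
      have hchain : RW G S w x := hconnS hwS hx
      have hcl : ∀ c c', c ∈ (S \ D) \ {x} → c' ∈ S → G.Adj c c' →
          c' ∈ (S \ D) \ {x} ∨ c' ∈ ({x} : Set V) := by
        rintro c c' ⟨⟨hcS, hcD⟩, hcx⟩ hc'S hadj
        by_cases h1 : c' = x
        · exact Or.inr h1
        · refine Or.inl ⟨⟨hc'S, fun hc'D => hcD ?_⟩, h1⟩
          exact cmp_closed hc'D ⟨hcS, hcx⟩ hadj.symm
      rcases confine hchain (show w ∈ (S \ D) \ {x} from ⟨⟨hwS, hwD⟩, hwx⟩) hcl with ⟨_, hxP⟩ | ⟨c, t, hcP, ht, _, hr, hadj⟩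
      · exact absurd rfl hxP.2
      · rw [Set.mem_singleton_iff] at ht; subst ht
        have : RW G (S \ D) w c := rw_mono Set.diff_subset hr
        exact this.tail ⟨hadj, ⟨hcP.1.1, hcP.1.2⟩, hxSD⟩
    have hconnSD : Conn G (S \ D) := by
      intro w hw w' hw'
      exact rw_trans (hSD w hw) (rw_symm (hSD w' hw'))
    -- crossing edge from D to x
    have hcross : ∃ d ∈ D, G.Adj d x := by
      have hchain : RW G S z x := hconnS hz hx
      have hcl : ∀ c c', c ∈ D → c' ∈ S → G.Adj c c' → c' ∈ D ∨ c' ∈ ({x} : Set V) := by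
        intro c c' hcD hc'S hadj
        by_cases h1 : c' = x
        · exact Or.inr h1
        · exact Or.inl (cmp_closed hcD ⟨hc'S, h1⟩ hadj)
      rcases confine hchain hzD hcl with ⟨_, hxP⟩ | ⟨c, t, hcP, ht, _, _, hadj⟩
      · exact absurd hxP hxD
      · rw [Set.mem_singleton_iff] at ht; subst ht
        exact ⟨c, hcP, hadj⟩
    obtain ⟨d, hdD, hdx⟩ := hcross
    -- cardinalities
    have hDcard : D.ncard ≤ n := by
      have h1 : D.ncard < S.ncard := by
        refine Set.ncard_lt_ncard ?_ (Set.toFinite S)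
        exact ⟨fun y hy => (hDS hy).1, fun hsub => hxD (hsub hx)⟩
      omega
    have hSDcard : (S \ D).ncard ≤ n := by
      have h1 : (S \ D).ncard < S.ncard := by
        refine Set.ncard_lt_ncard ?_ (Set.toFinite S)
        exact ⟨Set.diff_subset, fun hsub => (hsub hz).2 hzD⟩
      omega
    obtain ⟨E₁, hE₁⟩ := ih D hDcard ⟨z, hzD⟩ hconnD
    obtain ⟨E₂, hE₂⟩ := ih (S \ D) hSDcard ⟨x, hxSD⟩ hconnSD
    have hjoin := onTree_join (G := G) (A := D) (B := S \ D)
      (fun y hy => hy.2.2 hy.1) hE₁ hE₂ hdD hxSD hdx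
    have : D ∪ (S \ D) = S := Set.union_diff_cancel' (fun y hy => hy) fun y hy => (hDS hy).1
    rw [this] at hjoin
    exact ⟨_, hjoin⟩

section Partition

variable {A B : Set V} {a b u v x y z : V}

lemma cmp_not_mem_disjoint {S : Set V} {z w s : V} (hw : w ∈ S) (hnz : w ∉ Cmp G S z)
    (hs : s ∈ Cmp G S w) : s ∉ Cmp G S z :=
  fun hs' => hnz ⟨hw, rw_trans hs'.2 (rw_symm hs.2)⟩

lemma mem_B_not_A (hcomp : B = Aᶜ) (hx : x ∈ B) : x ∉ A := by
  rw [hcomp] at hx; exact hx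

lemma mem_A_not_B (hcomp : B = Aᶜ) (hx : x ∈ A) : x ∉ B := by
  rw [hcomp]; exact fun h => h hx

lemma mem_B_of_not_A (hcomp : B = Aᶜ) (hx : x ∉ A) : x ∈ B := by
  rw [hcomp]; exact hx

/-- From a vertex of `B \ {x}`, its component in `B \ {x}` has an edge into `A`. -/
lemma exit_exists (hcomp : B = Aᶜ) (hcutx : Conn G {t | t ≠ x}) {w : V}
    (hw : w ∈ B \ {x}) (ha : a ∈ A) (hxB : x ∈ B) :
    ∃ c ∈ Cmp G (B \ {x}) w, ∃ t ∈ A, G.Adj c t ∧ RW G (Cmp G (B \ {x}) w) w c := by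
  have hax : a ≠ x := fun h => mem_A_not_B hcomp ha (h ▸ hxB)
  have hwx : (w : V) ≠ x := hw.2
  have hchain : RW G {t | t ≠ x} w a := hcutx hwx hax
  have hcl : ∀ c c', c ∈ Cmp G (B \ {x}) w → c' ∈ {t | t ≠ x} → G.Adj c c' →
      c' ∈ Cmp G (B \ {x}) w ∨ c' ∈ A := by
    intro c c' hc hc' hadj
    by_cases hA : c' ∈ A
    · exact Or.inr hA
    · exact Or.inl (cmp_closed hc ⟨mem_B_of_not_A hcomp hA, hc'⟩ hadj)
  rcases confine hchain (mem_cmp_self hw) hcl with ⟨_, haP⟩ | ⟨c, t, hc, ht, _, hr, hadj⟩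
  · exact absurd (cmp_subset haP).1 (mem_A_not_B hcomp ha)
  · exact ⟨c, hc, t, ht, hadj, hr⟩

/-- The component of `z` in `B \ {x}` has an edge to `x` itself. -/
lemma adj_to_cmp (hconnB : Conn G B) (hx : x ∈ B) (hz : z ∈ B) (hzx : z ≠ x) :
    ∃ c ∈ Cmp G (B \ {x}) z, G.Adj c x := by
  have hchain : RW G B z x := hconnB hz hx
  have hcl : ∀ c c', c ∈ Cmp G (B \ {x}) z → c' ∈ B → G.Adj c c' →
      c' ∈ Cmp G (B \ {x}) z ∨ c' ∈ ({x} : Set V) := by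
    intro c c' hc hc' hadj
    by_cases h1 : c' = x
    · exact Or.inr h1
    · exact Or.inl (cmp_closed hc ⟨hc', h1⟩ hadj)
  rcases confine hchain (mem_cmp_self (show z ∈ B \ {x} from ⟨hz, hzx⟩)) hcl with ⟨_, hxP⟩ | ⟨c, t, hc, ht, _, _, hadj⟩
  · exact absurd rfl (cmp_subset hxP).2
  · rw [Set.mem_singleton_iff] at ht; subst ht
    exact ⟨c, hc, hadj⟩

/-- There is a vertex of `B` other than `b` with a neighbour in `A`. -/
lemma exists_boundary (hcomp : B = Aᶜ) (hcutb : Conn G {t | t ≠ b}) (ha : a ∈ A)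
    (hb : b ∈ B) {w : V} (hw : w ∈ B) (hwb : w ≠ b) :
    ∃ x ∈ B, x ≠ b ∧ ∃ y ∈ A, G.Adj x y := by
  have hab : a ≠ b := fun h => mem_A_not_B hcomp ha (h ▸ hb)
  have hchain : RW G {t | t ≠ b} w a := hcutb hwb hab
  have hcl : ∀ c c', c ∈ B \ {b} → c' ∈ {t | t ≠ b} → G.Adj c c' →
      c' ∈ B \ {b} ∨ c' ∈ A := by
    intro c c' _ hc' hadj
    by_cases hA : c' ∈ A
    · exact Or.inr hA
    · exact Or.inl ⟨mem_B_of_not_A hcomp hA, hc'⟩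
  rcases confine hchain (show w ∈ B \ {b} from ⟨hw, hwb⟩) hcl with ⟨_, haP⟩ | ⟨c, t, hc, ht, _, _, hadj⟩
  · exact absurd haP.1 (mem_A_not_B hcomp ha)
  · exact ⟨c, hc.1, hc.2, t, ht, hadj⟩

/-- Move 1: shrink `B` to the component of `b` after removing a boundary vertex `x`. -/
lemma move1 (hcomp : B = Aᶜ) (hcA : Conn G A) (hcutx : Conn G {t | t ≠ x})
    (ha : a ∈ A) (hb : b ∈ B) (hx : x ∈ B) (hxb : x ≠ b) (hy : y ∈ A) (hxy : G.Adj x y) :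
    Conn G (Cmp G (B \ {x}) b) ∧ Conn G (Cmp G (B \ {x}) b)ᶜ := by
  set C := Cmp G (B \ {x}) b with hC
  have hbBx : b ∈ B \ {x} := ⟨hb, fun h => hxb (Set.mem_singleton_iff.mp h).symm⟩
  have hCsub : C ⊆ B \ {x} := cmp_subset
  have hAC : ∀ s ∈ A, s ∉ C := fun s hs hsC => mem_A_not_B hcomp hs (hCsub hsC).1
  have key : ∀ w ∈ (Cᶜ : Set V), RW G Cᶜ w a := by
    intro w hw
    by_cases hwA : w ∈ A
    · exact rw_mono (fun s hs => hAC s hs) (hcA hwA ha)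
    · have hwB : w ∈ B := mem_B_of_not_A hcomp hwA
      by_cases hwx : w = x
      · subst hwx
        refine Relation.ReflTransGen.head ⟨hxy, hw, hAC y hy⟩
          (rw_mono (fun s hs => hAC s hs) (hcA hy ha))
      · have hwBx : w ∈ B \ {x} := ⟨hwB, hwx⟩
        have hwC : w ∉ C := hw
        obtain ⟨c, hc, t, ht, hadj, hr⟩ := exit_exists hcomp hcutx hwBx ha hx
        have hDsub : ∀ s ∈ Cmp G (B \ {x}) w, s ∉ C :=
          fun s hs => cmp_not_mem_disjoint hwBx hwC hs
        refine rw_trans (rw_mono (fun s hs => hDsub s hs) hr) ?_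
        refine Relation.ReflTransGen.head ⟨hadj, hDsub c hc, hAC t ht⟩
          (rw_mono (fun s hs => hAC s hs) (hcA ht ha))
  refine ⟨cmp_conn hbBx, fun w hw w' hw' => rw_trans (key w hw) (rw_symm (key w' hw'))⟩

/-- Move 2: transfer a non-`b` component `D` of `B \ {x}` over to the `A` side. -/
lemma move2 (hcomp : B = Aᶜ) (hcA : Conn G A) (hcB : Conn G B) (hcutx : Conn G {t | t ≠ x})
    (ha : a ∈ A) (hb : b ∈ B) (hx : x ∈ B) (hz : z ∈ B \ {x})
    (hznotC : z ∉ Cmp G (B \ {x}) b) :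
    Conn G (A ∪ Cmp G (B \ {x}) z) ∧ Conn G (B \ Cmp G (B \ {x}) z) ∧
      B \ Cmp G (B \ {x}) z = (A ∪ Cmp G (B \ {x}) z)ᶜ ∧
      b ∈ B \ Cmp G (B \ {x}) z ∧ x ∈ B \ Cmp G (B \ {x}) z := by
  set D := Cmp G (B \ {x}) z with hD
  have hDsub : D ⊆ B \ {x} := cmp_subset
  have hbD : b ∉ D := fun hbD => hznotC ⟨hz, rw_symm hbD.2⟩
  have hxD : x ∉ D := fun h => (hDsub h).2 rfl
  have hcompl : B \ D = (A ∪ D)ᶜ := by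
    ext s
    simp only [Set.mem_diff, Set.mem_compl_iff, Set.mem_union, hcomp]
    tauto
  have hconnAD : Conn G (A ∪ D) := by
    obtain ⟨c, hc, t, ht, hadj, _⟩ := exit_exists hcomp hcutx hz ha hx
    have key : ∀ w ∈ A ∪ D, RW G (A ∪ D) w a := by
      rintro w (hwA | hwD)
      · exact rw_mono Set.subset_union_left (hcA hwA ha)
      · refine rw_trans (rw_mono Set.subset_union_right ((cmp_conn hz) hwD hc)) ?_
        refine Relation.ReflTransGen.head ⟨hadj, Or.inr hc, Or.inl ht⟩
          (rw_mono Set.subset_union_left (hcA ht ha))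
    exact fun w hw w' hw' => rw_trans (key w hw) (rw_symm (key w' hw'))
  have hxBD : x ∈ B \ D := ⟨hx, hxD⟩
  have hconnBD : Conn G (B \ D) := by
    have key : ∀ w ∈ B \ D, RW G (B \ D) w x := by
      rintro w ⟨hwB, hwD⟩
      by_cases hwx : w = x
      · subst hwx; exact rw_refl
      have hchain : RW G B w x := hcB hwB hx
      have hcl : ∀ c c', c ∈ (B \ D) \ {x} → c' ∈ B → G.Adj c c' →
          c' ∈ (B \ D) \ {x} ∨ c' ∈ ({x} : Set V) := by
        rintro c c' ⟨⟨hcB', hcD⟩, hcx⟩ hc'B hadj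
        by_cases h1 : c' = x
        · exact Or.inr h1
        · refine Or.inl ⟨⟨hc'B, fun hc'D => hcD ?_⟩, h1⟩
          exact cmp_closed hc'D ⟨hcB', hcx⟩ hadj.symm
      rcases confine hchain (show w ∈ (B \ D) \ {x} from ⟨⟨hwB, hwD⟩, hwx⟩) hcl with
        ⟨_, hxP⟩ | ⟨c, t, hc, ht, _, hr, hadj⟩
      · exact absurd rfl hxP.2
      · rw [Set.mem_singleton_iff] at ht; subst ht
        exact (rw_mono Set.diff_subset hr).tail ⟨hadj, hc.1, hxBD⟩
    exact fun w hw w' hw' => rw_trans (key w hw) (rw_symm (key w' hw'))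
  exact ⟨hconnAD, hconnBD, hcompl, ⟨hb, hbD⟩, hxBD⟩

end Partition

section PartMain

variable [Fintype V] {A B : Set V} {a b u v x y z : V}

/-- Split helper from move 2: `z` goes to the `A`-side, `w'` stays on the `B`-side. -/
lemma split2 (hcomp : B = Aᶜ) (hcA : Conn G A) (hcB : Conn G B) (hcutx : Conn G {t | t ≠ x})
    (ha : a ∈ A) (hb : b ∈ B) (hx : x ∈ B) (hz : z ∈ B \ {x})
    (hznotC : z ∉ Cmp G (B \ {x}) b) {w' : V} (hw'B : w' ∈ B)
    (hw'D : w' ∉ Cmp G (B \ {x}) z) :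
    ∃ A' : Set V, a ∈ A' ∧ b ∉ A' ∧ z ∈ A' ∧ w' ∉ A' ∧ Conn G A' ∧ Conn G A'ᶜ := by
  obtain ⟨hcAD, hcBD, hcompl, hbBD, _⟩ := move2 hcomp hcA hcB hcutx ha hb hx hz hznotC
  refine ⟨A ∪ Cmp G (B \ {x}) z, Or.inl ha, ?_, Or.inr (mem_cmp_self hz), ?_, hcAD, ?_⟩
  · exact fun h => h.elim (fun hA => mem_B_not_A hcomp hb hA) hbBD.2
  · rintro (h | h)
    · exact mem_B_not_A hcomp hw'B h
    · exact hw'D h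
  · rw [← hcompl]; exact hcBD

end PartMain

section PartMain2

variable [Fintype V]

lemma part_aux (hcut : ∀ t : V, Conn G {w | w ≠ t}) {a b u v : V} (huv : u ≠ v) :
    ∀ n : ℕ, ∀ A : Set V, Aᶜ.ncard ≤ n → a ∈ A → b ∈ Aᶜ → u ∈ Aᶜ → v ∈ Aᶜ →
      Conn G A → Conn G Aᶜ →
      ∃ A' : Set V, a ∈ A' ∧ b ∉ A' ∧ (u ∈ A' ↔ v ∉ A') ∧ Conn G A' ∧ Conn G A'ᶜ := by
  intro n
  induction n with
  | zero =>
    intro A hcard _ hb _ _ _ _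
    rw [Nat.le_zero, Set.ncard_eq_zero (Set.toFinite _)] at hcard
    rw [hcard] at hb
    exact absurd hb (Set.notMem_empty _)
  | succ n ih =>
    intro A hcard ha hb hu hv hcA hcB
    set B := Aᶜ with hB
    -- boundary vertex x
    have hwex : ∃ w ∈ B, w ≠ b := by
      by_cases hub : u = b
      · exact ⟨v, hv, fun h => huv (h.symm ▸ hub.symm ▸ rfl)⟩
      · exact ⟨u, hu, hub⟩
    obtain ⟨w₀, hw₀, hw₀b⟩ := hwex
    obtain ⟨x, hx, hxb, y, hy, hxy⟩ := exists_boundary hB (hcut b) ha hb hw₀ hw₀b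
    -- cardinality utility
    have cardlt : ∀ {x₀ : V}, x₀ ∈ B → ∀ {z₀ : V}, (Cmp G (B \ {x₀}) z₀).ncard ≤ n := by
      intro x₀ hx₀ z₀
      have h1 : Cmp G (B \ {x₀}) z₀ ⊆ B := fun s hs => (cmp_subset hs).1
      have h2 : x₀ ∉ Cmp G (B \ {x₀}) z₀ := fun h => (cmp_subset h).2 rfl
      have h3 : (Cmp G (B \ {x₀}) z₀).ncard < B.ncard :=
        Set.ncard_lt_ncard ⟨h1, fun hc => h2 (hc hx₀)⟩ (Set.toFinite B)
      omega
    -- finishing via move1 + outer recursion when u,v are both in the b-component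
    have finish1 : ∀ {x₀ y₀ : V}, x₀ ∈ B → x₀ ≠ b → y₀ ∈ A → G.Adj x₀ y₀ →
        u ∈ Cmp G (B \ {x₀}) b → v ∈ Cmp G (B \ {x₀}) b →
        ∃ A' : Set V, a ∈ A' ∧ b ∉ A' ∧ (u ∈ A' ↔ v ∉ A') ∧ Conn G A' ∧ Conn G A'ᶜ := by
      intro x₀ y₀ hx₀ hx₀b hy₀ hxy₀ huC hvC
      obtain ⟨hc1, hc2⟩ := move1 hB hcA (hcut x₀) ha hb hx₀ hx₀b hy₀ hxy₀
      set C := Cmp G (B \ {x₀}) b with hCdef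
      have hCB : C ⊆ B := fun s hs => (cmp_subset hs).1
      refine ih Cᶜ ?_ ?_ ?_ ?_ ?_ hc2 ?_
      · rw [compl_compl]; exact cardlt hx₀
      · exact fun h => mem_A_not_B hB ha (hCB h)
      · rw [compl_compl]
        exact mem_cmp_self ⟨hb, fun h => hx₀b (Set.mem_singleton_iff.mp h).symm⟩
      all_goals try rw [compl_compl]
      · exact huC
      · exact hvC
      · exact hc1
    -- split via move1 when exactly one of u, v is in the b-component and the other is x₀
    have finish1x : ∀ {x₀ y₀ : V}, x₀ ∈ B → x₀ ≠ b → y₀ ∈ A → G.Adj x₀ y₀ →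
        ∀ {p q : V}, p = x₀ → q ∈ Cmp G (B \ {x₀}) b → (p = u ∧ q = v) ∨ (p = v ∧ q = u) →
        ∃ A' : Set V, a ∈ A' ∧ b ∉ A' ∧ (u ∈ A' ↔ v ∉ A') ∧ Conn G A' ∧ Conn G A'ᶜ := by
      intro x₀ y₀ hx₀ hx₀b hy₀ hxy₀ p q hp hq hor
      obtain ⟨hc1, hc2⟩ := move1 hB hcA (hcut x₀) ha hb hx₀ hx₀b hy₀ hxy₀
      set C := Cmp G (B \ {x₀}) b with hCdef
      have hCB : C ⊆ B := fun s hs => (cmp_subset hs).1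
      have hpA' : p ∈ Cᶜ := by rw [hp]; exact fun h => (cmp_subset h).2 rfl
      have hqA' : q ∉ Cᶜ := fun h => h hq
      have hbC : b ∈ C :=
        mem_cmp_self ⟨hb, fun h => hx₀b (Set.mem_singleton_iff.mp h).symm⟩
      refine ⟨Cᶜ, fun h => mem_A_not_B hB ha (hCB h), fun h => h hbC, ?_, hc2, ?_⟩
      · rcases hor with ⟨rfl, rfl⟩ | ⟨rfl, rfl⟩
        · exact iff_of_true hpA' hqA'
        · exact iff_of_false (fun h => hqA' h) (fun h => h hpA')
      · rw [compl_compl]; exact hc1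
    -- split via move2
    have finish2 : ∀ {x₀ : V}, x₀ ∈ B →
        ∀ {p q : V}, p ∈ B \ {x₀} → p ∉ Cmp G (B \ {x₀}) b → q ∈ B →
        q ∉ Cmp G (B \ {x₀}) p → (p = u ∧ q = v) ∨ (p = v ∧ q = u) →
        ∃ A' : Set V, a ∈ A' ∧ b ∉ A' ∧ (u ∈ A' ↔ v ∉ A') ∧ Conn G A' ∧ Conn G A'ᶜ := by
      intro x₀ hx₀ p q hp hpC hq hqD hor
      obtain ⟨A', ha', hb', hpA', hqA', hc1, hc2⟩ :=
        split2 hB hcA hcB (hcut x₀) ha hb hx₀ hp hpC hq hqD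
      refine ⟨A', ha', hb', ?_, hc1, hc2⟩
      rcases hor with ⟨rfl, rfl⟩ | ⟨rfl, rfl⟩
      · exact iff_of_true hpA' (fun h => hqA' h)
      · exact iff_of_false hqA' (fun h => h hpA')
    -- the main case analysis, given a boundary vertex x₀ with u,v ∈ B \ {x₀} not in the
    -- b-component... handled by inner induction on the size of the component of u.
    have inner : ∀ m : ℕ, ∀ x₂ : V, x₂ ∈ B → x₂ ≠ b → (∃ y₂ ∈ A, G.Adj x₂ y₂) →
        u ∈ B \ {x₂} → v ∈ B \ {x₂} → u ∉ Cmp G (B \ {x₂}) b →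
        (Cmp G (B \ {x₂}) u).ncard ≤ m →
        ∃ A' : Set V, a ∈ A' ∧ b ∉ A' ∧ (u ∈ A' ↔ v ∉ A') ∧ Conn G A' ∧ Conn G A'ᶜ := by
      intro m
      induction m with
      | zero =>
        intro x₂ hx₂B hx₂b _ huB _ _ hcard0
        have : u ∈ Cmp G (B \ {x₂}) u := mem_cmp_self huB
        have hpos : 0 < (Cmp G (B \ {x₂}) u).ncard :=
          (Set.ncard_pos (Set.toFinite _)).mpr ⟨u, this⟩
        omega
      | succ m ihm =>
        intro x₂ hx₂B hx₂b hadjx₂ huB hvB huC hcardm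
        obtain ⟨y₂, hy₂, hx₂y₂⟩ := hadjx₂
        set D := Cmp G (B \ {x₂}) u with hDdef
        obtain ⟨d, hdD, t, htA, hdt, _⟩ := exit_exists hB (hcut x₂) huB ha hx₂B
        have hdBx : d ∈ B \ {x₂} := cmp_subset hdD
        have hdB : d ∈ B := hdBx.1
        have hDnotC : ∀ s ∈ D, s ∉ Cmp G (B \ {x₂}) b :=
          fun s hs => cmp_not_mem_disjoint huB huC hs
        have hdb : d ≠ b := by
          intro h
          exact hDnotC d hdD (h ▸ mem_cmp_self
            ⟨hdBx.1, hdBx.2⟩)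
        set C₂ := Cmp G (B \ {d}) b with hC₂def
        -- x₂ lies in C₂
        have hx₂C₂ : x₂ ∈ C₂ := by
          obtain ⟨c₀, hc₀, hc₀x₂⟩ := adj_to_cmp hcB hx₂B hb (fun h => hx₂b h.symm)
          have hCsub : Cmp G (B \ {x₂}) b ⊆ B \ {d} := by
            intro s hs
            exact ⟨(cmp_subset hs).1, fun h => hDnotC d hdD (h ▸ hs)⟩
          have hbBx₂ : b ∈ B \ {x₂} := ⟨hb, fun h => hx₂b (Set.mem_singleton_iff.mp h).symm⟩
          have hchain : RW G (B \ {d}) b c₀ :=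
            rw_mono hCsub (rw_cmp hbBx₂ hc₀.2)
          have hx₂Bd : x₂ ∈ B \ {d} := ⟨hx₂B, fun h => hdBx.2 (Set.mem_singleton_iff.mp h).symm⟩
          exact ⟨hx₂Bd, hchain.tail ⟨hc₀x₂, hCsub hc₀, hx₂Bd⟩⟩
        by_cases huC2 : u ∈ C₂ <;> by_cases hvC2 : v ∈ C₂
        · -- both in the new b-component : move1 and recurse outer
          exact finish1 hdB hdb htA hdt huC2 hvC2
        · -- u ∈ C₂, v ∉ C₂
          by_cases hvd : v = d
          · exact finish1x hdB hdb htA hdt hvd huC2 (Or.inr ⟨rfl, rfl⟩)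
          · have hvBd : v ∈ B \ {d} := ⟨hvB.1, hvd⟩
            refine finish2 hdB (p := v) (q := u) hvBd hvC2 huB.1 ?_ (Or.inr ⟨rfl, rfl⟩)
            intro h
            exact cmp_not_mem_disjoint hvBd hvC2 h huC2
        · -- u ∉ C₂, v ∈ C₂
          by_cases hud : u = d
          · exact finish1x hdB hdb htA hdt hud hvC2 (Or.inl ⟨rfl, rfl⟩)
          · have huBd : u ∈ B \ {d} := ⟨huB.1, hud⟩
            refine finish2 hdB (p := u) (q := v) huBd huC2 hvB.1 ?_ (Or.inl ⟨rfl, rfl⟩)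
            intro h
            exact cmp_not_mem_disjoint huBd huC2 h hvC2
        · -- neither in C₂
          by_cases hud : u = d
          · -- u = d, so v ≠ d ; move2 with z := v
            have hvd : v ≠ d := fun h => huv (hud ▸ h ▸ rfl)
            have hunotDv : u ∉ Cmp G (B \ {d}) v := fun h => (cmp_subset h).2 hud
            exact finish2 hdB (p := v) (q := u) (show v ∈ B \ {d} from ⟨hvB.1, hvd⟩) hvC2 huB.1 hunotDv
              (Or.inr ⟨rfl, rfl⟩)
          by_cases hvd : v = d
          · have hvnotDu : v ∉ Cmp G (B \ {d}) u := fun h => (cmp_subset h).2 hvd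
            exact finish2 hdB (p := u) (q := v) (show u ∈ B \ {d} from ⟨huB.1, hud⟩) huC2 hvB.1 hvnotDu
              (Or.inl ⟨rfl, rfl⟩)
          -- u, v ∉ C₂, u,v ≠ d : recurse inner with the strictly smaller component
          have huBd : u ∈ B \ {d} := ⟨huB.1, hud⟩
          have hvBd : v ∈ B \ {d} := ⟨hvB.1, hvd⟩
          have hsub : Cmp G (B \ {d}) u ⊆ D \ {d} := by
            intro s hs
            have hstart : u ∈ D \ {d} := ⟨mem_cmp_self huB, hud⟩
            have hcl : ∀ c c', c ∈ D \ {d} → c' ∈ B \ {d} → G.Adj c c' →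
                c' ∈ D \ {d} ∨ c' ∈ ({x₂} : Set V) := by
              rintro c c' ⟨hcD, hcd⟩ hc'Bd hadj
              by_cases h1 : c' = x₂
              · exact Or.inr h1
              · exact Or.inl ⟨cmp_closed hcD ⟨hc'Bd.1, h1⟩ hadj, hc'Bd.2⟩
            rcases confine hs.2 hstart hcl with ⟨hr, hsP⟩ | ⟨c, t₂, hc, ht₂, ht₂Q, hr, hadj⟩
            · exact hsP
            · exfalso
              rw [Set.mem_singleton_iff] at ht₂
              rw [ht₂] at ht₂Q hadj
              have hx₂Du : x₂ ∈ Cmp G (B \ {d}) u := by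
                refine ⟨ht₂Q, ?_⟩
                refine (rw_mono (fun s₂ hs₂ => ?_) hr).tail ⟨hadj, ?_, ht₂Q⟩
                · exact ⟨(cmp_subset hs₂.1).1, hs₂.2⟩
                · exact ⟨(cmp_subset hc.1).1, hc.2⟩
              exact cmp_not_mem_disjoint huBd huC2 hx₂Du hx₂C₂
          have hcard' : (Cmp G (B \ {d}) u).ncard ≤ m := by
            have h1 : (Cmp G (B \ {d}) u).ncard < D.ncard := by
              refine Set.ncard_lt_ncard ?_ (Set.toFinite D)
              refine ⟨fun s hs => (hsub hs).1, fun hc => ?_⟩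
              exact (hsub (hc hdD)).2 rfl
            omega
          exact ihm d hdB hdb ⟨t, htA, hdt⟩ huBd hvBd huC2 hcard'
    -- outer case analysis
    set C := Cmp G (B \ {x}) b with hCdef
    by_cases huC : u ∈ C <;> by_cases hvC : v ∈ C
    · exact finish1 hx hxb hy hxy huC hvC
    · -- u ∈ C, v ∉ C
      by_cases hvx : v = x
      · exact finish1x hx hxb hy hxy hvx huC (Or.inr ⟨rfl, rfl⟩)
      · have hvBx : v ∈ B \ {x} := ⟨hv, hvx⟩
        refine finish2 hx (p := v) (q := u) hvBx hvC hu ?_ (Or.inr ⟨rfl, rfl⟩)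
        intro h
        exact cmp_not_mem_disjoint hvBx hvC h huC
    · -- u ∉ C, v ∈ C
      by_cases hux : u = x
      · exact finish1x hx hxb hy hxy hux hvC (Or.inl ⟨rfl, rfl⟩)
      · have huBx : u ∈ B \ {x} := ⟨hu, hux⟩
        refine finish2 hx (p := u) (q := v) huBx huC hv ?_ (Or.inl ⟨rfl, rfl⟩)
        intro h
        exact cmp_not_mem_disjoint huBx huC h hvC
    · -- u ∉ C, v ∉ C
      by_cases hux : u = x
      · have hvx : v ≠ x := fun h => huv (hux ▸ h ▸ rfl)
        have hunotDv : u ∉ Cmp G (B \ {x}) v := fun h => (cmp_subset h).2 hux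
        exact finish2 hx (p := v) (q := u) (show v ∈ B \ {x} from ⟨hv, hvx⟩) hvC hu hunotDv (Or.inr ⟨rfl, rfl⟩)
      by_cases hvx : v = x
      · have hvnotDu : v ∉ Cmp G (B \ {x}) u := fun h => (cmp_subset h).2 hvx
        exact finish2 hx (p := u) (q := v) (show u ∈ B \ {x} from ⟨hu, hux⟩) huC hv hvnotDu (Or.inl ⟨rfl, rfl⟩)
      · exact inner (Cmp G (B \ {x}) u).ncard x hx hxb ⟨y, hy, hxy⟩ ⟨hu, hux⟩ ⟨hv, hvx⟩
          huC le_rfl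

end PartMain2

/-- The partition lemma: a biconnected graph admits a connected partition separating
both given pairs. -/
lemma part [Fintype V] (hcut : ∀ t : V, Conn G {w | w ≠ t}) {a b u v : V}
    (hab : G.Adj a b) (huv : u ≠ v) :
    ∃ A' : Set V, a ∈ A' ∧ b ∉ A' ∧ (u ∈ A' ↔ v ∉ A') ∧ Conn G A' ∧ Conn G A'ᶜ := by
  have hcompl : ({a}ᶜ : Set V) = {w | w ≠ a} := by ext w; simp
  have hconnA : Conn G {a} := by
    rintro x rfl y rfl
    exact rw_refl
  have hconnB : Conn G ({a}ᶜ : Set V) := by rw [hcompl]; exact hcut a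
  have hba : b ∉ ({a} : Set V) := fun h => hab.ne' (Set.mem_singleton_iff.mp h)
  by_cases hua : u = a
  · subst hua
    exact ⟨{u}, rfl, hba, iff_of_true rfl (fun h => huv (Set.mem_singleton_iff.mp h).symm),
      hconnA, hconnB⟩
  by_cases hva : v = a
  · subst hva
    exact ⟨{v}, rfl, hba, iff_of_false hua (fun h => h rfl), hconnA, hconnB⟩
  · exact part_aux hcut huv ({a}ᶜ : Set V).ncard {a} le_rfl rfl
      (fun h => hab.ne' h) hua hva hconnA hconnB

theorem stmt2' {V : Type*} [Fintype V] (G : SimpleGraph V)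
    (hconn : G.Connected) (hcut : ∀ v : V, (G.induce {w | w ≠ v}).Connected)
    (e₁ e₂ : Sym2 V) (h₁ : e₁ ∈ G.edgeSet) (h₂ : e₂ ∈ G.edgeSet) (hne : e₁ ≠ e₂) :
    ∃ F : Set (Sym2 V), (F ⊆ G.edgeSet ∧ (SimpleGraph.fromEdgeSet F).IsTree) ∧ e₁ ∈ F ∧
      ((F \ {e₁}) ∪ {e₂} ⊆ G.edgeSet ∧
        (SimpleGraph.fromEdgeSet ((F \ {e₁}) ∪ {e₂})).IsTree) := by
  classical
  have hcut' : ∀ t : V, Conn G {w | w ≠ t} := fun t => induce_connected_conn (hcut t)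
  induction e₁ using Sym2.ind with | _ a b => ?_
  induction e₂ using Sym2.ind with | _ u v => ?_
  rw [SimpleGraph.mem_edgeSet] at h₁ h₂
  obtain ⟨A, haA, hbA, hiff, hcA, hcB⟩ := part hcut' h₁ h₂.ne
  haveI : Nonempty V := ⟨a⟩
  -- spanning trees on both sides
  obtain ⟨E₁, hE₁⟩ := exists_onTree A.ncard A le_rfl ⟨a, haA⟩ hcA
  obtain ⟨E₂, hE₂⟩ := exists_onTree Aᶜ.ncard Aᶜ le_rfl ⟨b, hbA⟩ hcB
  have hdisj : ∀ x : V, ¬(x ∈ A ∧ x ∈ Aᶜ) := fun x h => h.2 h.1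
  have hunion : A ∪ Aᶜ = Set.univ := Set.union_compl_self A
  -- e₁ is not in either side's tree
  have he1E₁ : s(a, b) ∉ E₁ := fun h => hbA (hE₁.2.1 _ h b (Sym2.mem_mk_right a b))
  have he1E₂ : s(a, b) ∉ E₂ := fun h => (hE₂.2.1 _ h a (Sym2.mem_mk_left a b)) haA
  -- the tree F
  have hjoin1 := onTree_join hdisj hE₁ hE₂ haA hbA h₁
  rw [hunion] at hjoin1
  set F : Set (Sym2 V) := E₁ ∪ E₂ ∪ {s(a, b)} with hF
  have htreeF : (SimpleGraph.fromEdgeSet F).IsTree := by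
    refine ⟨⟨fun x y => hjoin1.2.2.2 trivial trivial⟩, hjoin1.2.2.1⟩
  -- orientation of e₂ across the cut
  have hor : ∃ p q : V, s(p, q) = s(u, v) ∧ p ∈ A ∧ q ∈ Aᶜ ∧ G.Adj p q := by
    by_cases hu : u ∈ A
    · exact ⟨u, v, rfl, hu, hiff.mp hu, h₂⟩
    · have hv : v ∈ A := by
        by_contra hv
        exact hu (hiff.mpr hv)
      exact ⟨v, u, Sym2.eq_swap, hv, hu, h₂.symm⟩
  obtain ⟨p, q, hpq, hpA, hqA, hadjpq⟩ := hor
  have hjoin2 := onTree_join hdisj hE₁ hE₂ hpA hqA hadjpq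
  rw [hunion] at hjoin2
  -- the swapped edge set
  have hswap : (F \ {s(a, b)}) ∪ {s(u, v)} = E₁ ∪ E₂ ∪ {s(p, q)} := by
    rw [← hpq]
    ext f
    simp only [hF, Set.mem_union, Set.mem_diff, Set.mem_singleton_iff]
    constructor
    · rintro (⟨(h | h) | h, hne'⟩ | h)
      · exact Or.inl (Or.inl h)
      · exact Or.inl (Or.inr h)
      · exact absurd h hne'
      · exact Or.inr h
    · rintro ((h | h) | h)
      · exact Or.inl ⟨Or.inl (Or.inl h), fun hh => he1E₁ (hh ▸ h)⟩
      · exact Or.inl ⟨Or.inl (Or.inr h), fun hh => he1E₂ (hh ▸ h)⟩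
      · exact Or.inr h
  refine ⟨F, ⟨hjoin1.1, htreeF⟩, Or.inr rfl, ?_, ?_⟩
  · rw [hswap]; exact hjoin2.1
  · rw [hswap]
    exact ⟨⟨fun x y => hjoin2.2.2.2 trivial trivial⟩, hjoin2.2.2.1⟩


end Aux

/-- if `G` is a biconnected finite graph (connected with no cutpoint), then
for any two distinct edges `e₁, e₂` of `G` there is a spanning tree `F` containing `e₁`
such that `(F \ {e₁}) ∪ {e₂}` is again a spanning tree of `G`. -/
theorem stmt2 {V : Type*} [Fintype V] (G : SimpleGraph V)
    (hconn : G.Connected) (hcut : ∀ v : V, (G.induce {w | w ≠ v}).Connected)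
    (e₁ e₂ : Sym2 V) (h₁ : e₁ ∈ G.edgeSet) (h₂ : e₂ ∈ G.edgeSet) (hne : e₁ ≠ e₂) :
    ∃ F : Set (Sym2 V), IsSpanningTree G F ∧ e₁ ∈ F ∧
      IsSpanningTree G ((F \ {e₁}) ∪ {e₂}) := by
  obtain ⟨F, hF1, hF2, hF3⟩ := stmt2' G hconn hcut e₁ e₂ h₁ h₂ hne
  exact ⟨F, hF1, hF2, hF3⟩
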